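/- Assume: (a) there exists p₀ > 0 such that for every n ∈ ℕ, ℙ(T_n = 1 and D_n = −∞ | 𝓕_{n−1}) ≥ p₀ almost surely; and (b) there exist constants c, C, q > 0 such that for every m ≥ 1, ℙ(D_m > m − 1 | 𝓕_{m−1}) ≤ C e^{−c (m−1)^q} almost surely. Then ℙ(κ_0 = ∞) > 0. -/

import Mathlib

open MeasureTheory ProbabilityTheory Set Filter Topology

lemma aux_summable_exp {c q : ℝ} (hc : 0 < c) (hq : 0 < q) :
    Summable fun n : ℕ => Real.exp (-c * (n : ℝ) ^ q) := by
  have h3 : Tendsto (fun n : ℕ => ((n:ℝ) ^ q) ^ (2/q) * Real.exp (-c * (n:ℝ)^q)) atTop (𝓝 0) :=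
    (tendsto_rpow_mul_exp_neg_mul_atTop_nhds_zero (2 / q) c hc).comp
      ((tendsto_rpow_atTop hq).comp tendsto_natCast_atTop_atTop)
  have h4 : ∀ n : ℕ, ((n:ℝ) ^ q) ^ (2/q) = (n:ℝ) ^ (2:ℝ) := by
    intro n
    rw [← Real.rpow_mul n.cast_nonneg]
    congr 1
    field_simp
  have h5 : ∀ᶠ n : ℕ in atTop, (n:ℝ) ^ (2:ℝ) * Real.exp (-c * (n:ℝ)^q) < 1 := by
    have := h3.eventually (gt_mem_nhds one_pos)
    filter_upwards [this] with n hn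
    rwa [h4 n] at hn
  apply summable_of_isBigO_nat (Real.summable_nat_rpow.mpr (by norm_num : (-2:ℝ) < -1))
  apply Asymptotics.IsBigO.of_bound 1
  filter_upwards [h5, eventually_ge_atTop 1] with n hn hn1
  have hnpos : (0:ℝ) < (n:ℝ) := by exact_mod_cast hn1
  have h2pos : (0:ℝ) < (n:ℝ) ^ (2:ℝ) := Real.rpow_pos_of_pos hnpos 2
  have hle : Real.exp (-c * (n:ℝ)^q) ≤ 1 / (n:ℝ) ^ (2:ℝ) := by
    rw [le_div_iff₀ h2pos]; nlinarith [hn]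
  rw [Real.norm_eq_abs, Real.norm_eq_abs, abs_of_pos (Real.exp_pos _),
    abs_of_pos (Real.rpow_pos_of_pos hnpos _), one_mul, Real.rpow_neg hnpos.le]
  rwa [inv_eq_one_div]

theorem kappa_zero_infinite_with_positive_probability
    {Ω : Type*} {mΩ : MeasurableSpace Ω}
    (μ : Measure Ω) [IsProbabilityMeasure μ]
    (ℱ : Filtration ℕ mΩ)
    (T : ℕ → Ω → ℝ) (D : ℕ → Ω → EReal)
    (hT_adapted : ∀ n : ℕ, Measurable[ℱ n] (T n))
    (hD_adapted : ∀ n : ℕ, Measurable[ℱ n] (D n))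
    (hT_one : ∀ (n : ℕ) (ω : Ω), 1 ≤ T n ω)
    (hD_top : ∀ (n : ℕ) (ω : Ω), D n ω ≠ ⊤)
    (p₀ : ℝ) (hp₀ : 0 < p₀)
    (ha0 : ENNReal.ofReal p₀ ≤ μ {ω | T 0 ω = 1 ∧ D 0 ω = ⊥})
    (ha : ∀ n : ℕ, 1 ≤ n → ∀ᵐ ω ∂μ,
      p₀ ≤ (μ[({ω' | T n ω' = 1 ∧ D n ω' = ⊥}).indicator (fun _ => (1 : ℝ)) |
        ℱ (n - 1)]) ω)
    (c C q : ℝ) (hc : 0 < c) (hC : 0 < C) (hq : 0 < q)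
    (hb : ∀ m : ℕ, 1 ≤ m → ∀ᵐ ω ∂μ,
      (μ[({ω' | (((m : ℝ) - 1 : ℝ) : EReal) < D m ω'}).indicator (fun _ => (1 : ℝ)) |
        ℱ (m - 1)]) ω ≤ C * Real.exp (-c * ((m : ℝ) - 1) ^ q)) :
    0 < μ {ω | sInf {x : ℕ∞ | ∃ m : ℕ, x = (m : ℕ∞) ∧
        ((∑ i ∈ Finset.range m, T i ω : ℝ) : EReal) ≤ D m ω} = ⊤} := by
  -- notation
  set A : ℕ → Set Ω := fun n => {ω | T n ω = 1 ∧ D n ω = ⊥} with hA_def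
  set B : ℕ → Set Ω := fun m => {ω' | (((m : ℝ) - 1 : ℝ) : EReal) < D m ω'} with hB_def
  set G : ℕ → Set Ω := fun N => ⋂ n ∈ Finset.range N, A n with hG_def
  have hA_meas : ∀ n, MeasurableSet[ℱ n] (A n) := by
    intro n
    have h1 : MeasurableSet[ℱ n] {ω | T n ω = 1} := hT_adapted n (measurableSet_singleton 1)
    have h2 : MeasurableSet[ℱ n] {ω | D n ω = ⊥} := hD_adapted n (measurableSet_singleton ⊥)
    exact h1.inter h2
  have hB_meas : ∀ m, MeasurableSet[ℱ m] (B m) := by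
    intro m
    exact hD_adapted m measurableSet_Ioi
  have hG_meas : ∀ N j : ℕ, N ≤ j + 1 → MeasurableSet[ℱ j] (G N) := by
    intro N j hNj
    exact Finset.measurableSet_biInter _ fun n hn =>
      ℱ.mono (by simp at hn; omega) _ (hA_meas n)
  have key : ∀ (j : ℕ) (S A' : Set Ω), MeasurableSet[ℱ j] S → MeasurableSet A' →
      ∫ ω in S, (μ[A'.indicator (fun _ => (1:ℝ)) | ℱ j]) ω ∂μ = (μ (S ∩ A')).toReal := by
    intro j S A' hS hA'
    have hint : Integrable (A'.indicator (fun _ => (1:ℝ))) μ := (integrable_const 1).indicator hA'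
    rw [setIntegral_condExp (ℱ.le j) hint hS, setIntegral_indicator hA', setIntegral_const,
      smul_eq_mul, mul_one, measureReal_def]
  have claim1 : ∀ N : ℕ, 1 ≤ N → p₀ ^ N ≤ (μ (G N)).toReal := by
    intro N hN
    induction N, hN using Nat.le_induction with
    | base =>
      have hG1 : G 1 = A 0 := by simp [hG_def]
      rw [hG1, pow_one]
      exact (ENNReal.ofReal_le_iff_le_toReal (measure_ne_top μ _)).mp ha0
    | succ N hN ih =>
      have hGN : MeasurableSet[ℱ (N-1)] (G N) := hG_meas N (N-1) (by omega)
      have hstep : p₀ * (μ (G N)).toReal ≤ (μ (G N ∩ A N)).toReal := by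
        rw [← key (N-1) (G N) (A N) hGN (ℱ.le N _ (hA_meas N))]
        calc p₀ * (μ (G N)).toReal = ∫ _ω in G N, p₀ ∂μ := by
              rw [setIntegral_const, smul_eq_mul, mul_comm, measureReal_def]
          _ ≤ ∫ ω in G N, (μ[(A N).indicator (fun _ => (1:ℝ)) | ℱ (N-1)]) ω ∂μ :=
              setIntegral_mono_ae (integrable_const p₀).integrableOn
                integrable_condExp.integrableOn (ha N hN)
      have hG1 : G (N+1) = G N ∩ A N := by
        simp only [hG_def, Finset.range_add_one, Finset.set_biInter_insert]
        exact Set.inter_comm _ _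
      rw [hG1]
      calc p₀ ^ (N+1) = p₀ * p₀ ^ N := by ring
        _ ≤ p₀ * (μ (G N)).toReal := by nlinarith
        _ ≤ _ := hstep
  have claim2 : ∀ N m : ℕ, 1 ≤ N → N ≤ m →
      (μ (G N ∩ B m)).toReal ≤ C * Real.exp (-c * ((m:ℝ) - 1) ^ q) * (μ (G N)).toReal := by
    intro N m hN hNm
    have hGNm : MeasurableSet[ℱ (m-1)] (G N) := hG_meas N (m-1) (by omega)
    rw [← key (m-1) (G N) (B m) hGNm (ℱ.le m _ (hB_meas m))]
    calc ∫ ω in G N, (μ[(B m).indicator (fun _ => (1:ℝ)) | ℱ (m-1)]) ω ∂μ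
        ≤ ∫ _ω in G N, C * Real.exp (-c * ((m:ℝ) - 1) ^ q) ∂μ :=
          setIntegral_mono_ae integrable_condExp.integrableOn
            (integrable_const _).integrableOn (hb m (by omega))
      _ = C * Real.exp (-c * ((m:ℝ) - 1) ^ q) * (μ (G N)).toReal := by
          rw [setIntegral_const, smul_eq_mul, mul_comm, measureReal_def]
  -- choose N
  set f : ℕ → ℝ := fun k => C * Real.exp (-c * (k:ℝ) ^ q) with hf_def
  have hf_sum : Summable f := (aux_summable_exp hc hq).mul_left C
  have htail : Tendsto (fun i => ∑' k, f (k + i)) atTop (𝓝 0) := tendsto_sum_nat_add f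
  obtain ⟨M, hM⟩ : ∃ M : ℕ, ∑' k, f (k + M) < 1 := by
    rcases (htail.eventually (gt_mem_nhds one_pos)).exists with ⟨M, hM⟩
    exact ⟨M, hM⟩
  set N := M + 1 with hN_def
  have hN1 : 1 ≤ N := by omega
  set t := (μ (G N)).toReal with ht_def
  have ht_pos : 0 < t := lt_of_lt_of_le (pow_pos hp₀ N) (claim1 N hN1)
  set U : Set Ω := ⋃ k : ℕ, (G N ∩ B (N + k)) with hU_def
  have hU_lt : μ U < μ (G N) := by
    have h1 : μ U ≤ ∑' k, μ (G N ∩ B (N + k)) := measure_iUnion_le _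
    have h2 : ∀ k : ℕ, μ (G N ∩ B (N + k)) ≤ ENNReal.ofReal (f (k + M) * t) := by
      intro k
      have := claim2 N (N + k) hN1 (by omega)
      have heq : C * Real.exp (-c * (((N + k : ℕ):ℝ) - 1) ^ q) = f (k + M) := by
        simp only [hf_def]
        congr 2
        push_cast [hN_def]
        ring
      rw [heq] at this
      rw [← ENNReal.ofReal_toReal (measure_ne_top μ (G N ∩ B (N + k)))]
      exact ENNReal.ofReal_le_ofReal this
    have h3 : (∑' k, ENNReal.ofReal (f (k + M) * t)) = ENNReal.ofReal ((∑' k, f (k + M)) * t) := by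
      rw [← tsum_mul_right]
      rw [← ENNReal.ofReal_tsum_of_nonneg]
      · intro k
        exact mul_nonneg (mul_nonneg hC.le (Real.exp_pos _).le) ht_pos.le
      · exact (((summable_nat_add_iff M).mpr hf_sum).mul_right t)
    calc μ U ≤ ∑' k, μ (G N ∩ B (N + k)) := h1
      _ ≤ ∑' k, ENNReal.ofReal (f (k + M) * t) := ENNReal.tsum_le_tsum h2
      _ = ENNReal.ofReal ((∑' k, f (k + M)) * t) := h3
      _ < ENNReal.ofReal t := by
          rw [ENNReal.ofReal_lt_ofReal_iff ht_pos]
          have hnn : 0 ≤ ∑' k, f (k + M) :=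
            tsum_nonneg fun k => mul_nonneg hC.le (Real.exp_pos _).le
          nlinarith
      _ = μ (G N) := ENNReal.ofReal_toReal (measure_ne_top μ _)
  -- the target event contains G N \ U
  have hsubset : G N \ U ⊆ {ω | sInf {x : ℕ∞ | ∃ m : ℕ, x = (m : ℕ∞) ∧
      ((∑ i ∈ Finset.range m, T i ω : ℝ) : EReal) ≤ D m ω} = ⊤} := by
    rintro ω ⟨hωG, hωU⟩
    have hωG' : ∀ n, n < N → T n ω = 1 ∧ D n ω = ⊥ := by
      intro n hn
      have := Set.mem_iInter₂.mp hωG n (Finset.mem_range.mpr hn)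
      exact this
    have hempty : {x : ℕ∞ | ∃ m : ℕ, x = (m : ℕ∞) ∧
        ((∑ i ∈ Finset.range m, T i ω : ℝ) : EReal) ≤ D m ω} = ∅ := by
      rw [Set.eq_empty_iff_forall_notMem]
      rintro x ⟨m, rfl, hle⟩
      rcases lt_or_ge m N with hm | hm
      · have hbot : D m ω = ⊥ := (hωG' m hm).2
        rw [hbot, le_bot_iff] at hle
        exact EReal.coe_ne_bot _ hle
      · have hωB : ω ∉ B m := by
          intro hB
          apply hωU
          refine Set.mem_iUnion.mpr ⟨m - N, ⟨hωG, ?_⟩⟩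
          have : N + (m - N) = m := by omega
          rw [this]
          exact hB
        have hDle : D m ω ≤ (((m:ℝ) - 1 : ℝ) : EReal) := not_lt.mp hωB
        have hsum : (m:ℝ) ≤ ∑ i ∈ Finset.range m, T i ω := by
          calc (m:ℝ) = ∑ _i ∈ Finset.range m, (1:ℝ) := by simp
            _ ≤ ∑ i ∈ Finset.range m, T i ω := Finset.sum_le_sum fun i _ => hT_one i ω
        have : ((m:ℝ) : EReal) ≤ (((m:ℝ) - 1 : ℝ) : EReal) :=
          le_trans (EReal.coe_le_coe_iff.mpr hsum) (le_trans hle hDle)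
        have := EReal.coe_le_coe_iff.mp this
        linarith
    simp only [Set.mem_setOf_eq, hempty, sInf_empty]
  have hdiff_pos : 0 < μ (G N \ U) := by
    by_contra h
    push_neg at h
    have hzero : μ (G N \ U) = 0 := le_antisymm h zero_le
    have : μ (G N) ≤ μ (G N \ U) + μ U :=
      le_trans (measure_mono (Set.subset_diff_union _ _)) (measure_union_le _ _)
    rw [hzero, zero_add] at this
    exact absurd this (not_le.mpr hU_lt)
  exact lt_of_lt_of_le hdiff_pos (measure_mono hsubset)
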